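/- Let n ≥ 2, and let m_1 < ... < m_n be an arithmetic sequence with gcd(m_1, d) = 1, and write m_1 = q(n-1)+r with r ∈ {1,...,n-1}, α := q+d, k := n-r. Then for all integers s with 0 ≤ s < α, the number of monomials of degree s not in the ideal generated by {x_i x_j : 2 ≤ i ≤ j ≤ n-1} ∪ {x_1^α x_i : 1 ≤ i ≤ k} in the polynomial ring K[x_1,...,x_{n+1}] equals C(s+2, 2) + (n-2)·C(s+1, 2). -/

import Mathlib

lemma sum_range_choose' (m : ℕ) : ∑ i ∈ Finset.range (m+1), (i+1) = (m+2).choose 2 := by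
  induction m with
  | zero => decide
  | succ m ih =>
    rw [Finset.sum_range_succ, ih]
    have h2 := Nat.choose_succ_succ' (m+2) 1
    norm_num at h2
    rw [show m+1+2 = m+2+1 from by omega]
    omega

def myT (m : ℕ) : Finset (ℕ × ℕ × ℕ) :=
  (Finset.HasAntidiagonal.antidiagonal m).biUnion
    (fun p => (Finset.HasAntidiagonal.antidiagonal p.2).image (fun q => (p.1, q.1, q.2)))

lemma myT_mem {m : ℕ} {p : ℕ × ℕ × ℕ} : p ∈ myT m ↔ p.1 + p.2.1 + p.2.2 = m := by
  unfold myT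
  simp only [Finset.mem_biUnion, Finset.mem_image, Finset.HasAntidiagonal.mem_antidiagonal, Prod.exists]
  constructor
  · rintro ⟨a, b, hab, c, e, hce, h⟩
    obtain ⟨rfl, rfl, rfl⟩ : a = p.1 ∧ c = p.2.1 ∧ e = p.2.2 := by
      rw [Prod.ext_iff, Prod.ext_iff] at h; tauto
    omega
  · intro h
    exact ⟨p.1, p.2.1 + p.2.2, by omega, p.2.1, p.2.2, rfl, rfl⟩

lemma myT_card (m : ℕ) : (myT m).card = (m+2).choose 2 := by
  unfold myT
  rw [Finset.card_biUnion]
  · have h1 : ∀ p ∈ Finset.HasAntidiagonal.antidiagonal m,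
        ((Finset.HasAntidiagonal.antidiagonal p.2).image fun q => (p.1, q.1, q.2)).card = p.2 + 1 := by
      intro p _
      rw [Finset.card_image_of_injective _ (fun q q' h => by
          simpa [Prod.ext_iff] using (Prod.ext_iff.mp h).2),
        Finset.Nat.card_antidiagonal]
    rw [Finset.sum_congr rfl h1, Finset.Nat.sum_antidiagonal_eq_sum_range_succ_mk,
      ← sum_range_choose' m]
    rw [← Finset.sum_range_reflect (fun i => i + 1) (m+1)]
    apply Finset.sum_congr rfl
    intro i hi
    simp only [Finset.mem_range] at hi
    omega
  · intro p hp p' hp' hne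
    simp only [Finset.mem_coe, Finset.HasAntidiagonal.mem_antidiagonal] at hp hp'
    simp only [Function.onFun, Finset.disjoint_left, Finset.mem_image, Prod.exists]
    rintro x ⟨a, b, hab, rfl⟩ ⟨c, e, hce, h⟩
    apply hne
    simp only [Finset.HasAntidiagonal.mem_antidiagonal] at hab hce
    rw [Prod.ext_iff, Prod.ext_iff] at h
    obtain ⟨h1, h2, h3⟩ := h
    ext <;> simp_all

def phi (n : ℕ) (p : ℕ × ℕ × ℕ × ℕ) : ℕ → ℕ := fun i =>
  (if i = 1 then p.2.1 else 0) + (if i = n then p.2.2.1 else 0) +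
  (if i = n + 1 then p.2.2.2 else 0) + (if p.1 ≠ 0 ∧ i = p.1 then 1 else 0)

def myD (n s : ℕ) : Finset (ℕ × ℕ × ℕ × ℕ) :=
  {0} ×ˢ myT (s + 1) ∪ (Finset.Icc 2 (n - 1)) ×ˢ myT s

lemma myD_mem {n s t a b c : ℕ} :
    (t, a, b, c) ∈ myD n s ↔
      (t = 0 ∧ a + b + c = s + 1) ∨ (2 ≤ t ∧ t ≤ n - 1 ∧ a + b + c = s) := by
  unfold myD
  simp only [Finset.mem_union, Finset.mem_product, myT_mem, Finset.mem_Icc,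
    Finset.mem_singleton]
  omega

lemma phi_eval (n : ℕ) (hn : 2 ≤ n) (t a b c : ℕ)
    (ht : t = 0 ∨ (2 ≤ t ∧ t ≤ n - 1)) :
    phi n (t, a, b, c) 1 = a ∧ phi n (t, a, b, c) n = b ∧
    phi n (t, a, b, c) (n + 1) = c ∧
    (∀ i, 2 ≤ i → i ≤ n - 1 → phi n (t, a, b, c) i = if i = t then 1 else 0) ∧
    (∀ i, ¬(1 ≤ i ∧ i ≤ n + 1) → phi n (t, a, b, c) i = 0) := by
  unfold phi
  refine ⟨?_, ?_, ?_, ?_, ?_⟩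
  · rw [if_pos rfl, if_neg (by omega), if_neg (by omega), if_neg (by omega)]; simp
  · rw [if_pos rfl, if_neg (by omega), if_neg (by omega), if_neg (by omega)]; simp
  · rw [if_pos rfl, if_neg (by omega), if_neg (by omega), if_neg (by omega)]; simp
  · intro i h2 h3
    rw [if_neg (by omega), if_neg (by omega), if_neg (by omega)]
    by_cases hit : i = t
    · rw [if_pos ⟨by omega, hit⟩, if_pos hit]
    · rw [if_neg (by omega), if_neg hit]
  · intro i hi
    rw [if_neg (by omega), if_neg (by omega), if_neg (by omega), if_neg (by omega)]

theorem stmt_4 (n d m1 q r s : ℕ)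
    (hn : 2 ≤ n) (hd : 1 ≤ d) (hm1 : 1 ≤ m1)
    (hgcd : Nat.gcd m1 d = 1)
    (hdiv : m1 = q * (n - 1) + r) (hr1 : 1 ≤ r) (hr2 : r ≤ n - 1)
    (hs : s < q + d) :
    Set.ncard {γ : ℕ → ℕ |
        (∀ i, γ i ≠ 0 → 1 ≤ i ∧ i ≤ n + 1) ∧
        (∑ i ∈ Finset.Icc 1 (n + 1), γ i) = s ∧
        (∀ i j, 2 ≤ i → i ≤ j → j ≤ n - 1 →
          ¬ (if i = j then 2 ≤ γ i else 1 ≤ γ i ∧ 1 ≤ γ j)) ∧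
        (∀ i, 1 ≤ i → i ≤ n - r →
          ¬ (if i = 1 then q + d + 1 ≤ γ 1 else q + d ≤ γ 1 ∧ 1 ≤ γ i))} =
      Nat.choose (s + 2) 2 + (n - 2) * Nat.choose (s + 1) 2 := by
  classical
  have hsum_decomp : ∀ γ : ℕ → ℕ, ∑ i ∈ Finset.Icc 1 (n+1), γ i
      = γ 1 + γ n + γ (n+1) + ∑ i ∈ Finset.Icc 2 (n-1), γ i := by
    intro γ
    have hd : Finset.Icc 1 (n+1) = insert 1 (insert n (insert (n+1) (Finset.Icc 2 (n-1)))) := by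
      ext i; simp only [Finset.mem_Icc, Finset.mem_insert]; omega
    rw [hd, Finset.sum_insert (by simp only [Finset.mem_insert, Finset.mem_Icc]; omega),
      Finset.sum_insert (by simp only [Finset.mem_insert, Finset.mem_Icc]; omega),
      Finset.sum_insert (by simp only [Finset.mem_Icc]; omega)]
    ring
  rcases s with _ | s
  · -- degree 0
    have hone : {γ : ℕ → ℕ |
        (∀ i, γ i ≠ 0 → 1 ≤ i ∧ i ≤ n + 1) ∧
        (∑ i ∈ Finset.Icc 1 (n + 1), γ i) = 0 ∧
        (∀ i j, 2 ≤ i → i ≤ j → j ≤ n - 1 →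
          ¬ (if i = j then 2 ≤ γ i else 1 ≤ γ i ∧ 1 ≤ γ j)) ∧
        (∀ i, 1 ≤ i → i ≤ n - r →
          ¬ (if i = 1 then q + d + 1 ≤ γ 1 else q + d ≤ γ 1 ∧ 1 ≤ γ i))} =
        {(fun _ => 0 : ℕ → ℕ)} := by
      ext γ
      simp only [Set.mem_setOf_eq, Set.mem_singleton_iff]
      constructor
      · rintro ⟨h1, h2, h3, h4⟩
        funext i
        by_cases hi : 1 ≤ i ∧ i ≤ n + 1
        · exact Finset.sum_eq_zero_iff.mp h2 i (Finset.mem_Icc.mpr hi)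
        · by_contra hz
          exact hi (h1 i hz)
      · rintro rfl
        refine ⟨by simp, by simp, ?_, ?_⟩
        · intro i j _ _ _; split <;> simp
        · intro i _ _; split <;> simp
    rw [hone, Set.ncard_singleton]
    simp [Nat.choose]
  · -- degree s + 1
    have hset : {γ : ℕ → ℕ |
        (∀ i, γ i ≠ 0 → 1 ≤ i ∧ i ≤ n + 1) ∧
        (∑ i ∈ Finset.Icc 1 (n + 1), γ i) = s + 1 ∧
        (∀ i j, 2 ≤ i → i ≤ j → j ≤ n - 1 →
          ¬ (if i = j then 2 ≤ γ i else 1 ≤ γ i ∧ 1 ≤ γ j)) ∧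
        (∀ i, 1 ≤ i → i ≤ n - r →
          ¬ (if i = 1 then q + d + 1 ≤ γ 1 else q + d ≤ γ 1 ∧ 1 ≤ γ i))} =
        ↑((myD n s).image (phi n)) := by
      ext γ
      simp only [Set.mem_setOf_eq, Finset.coe_image, Set.mem_image, Finset.mem_coe]
      constructor
      · rintro ⟨h1, h2, h3, h4⟩
        by_cases hM : ∀ i, 2 ≤ i → i ≤ n - 1 → γ i = 0
        · refine ⟨(0, γ 1, γ n, γ (n+1)), ?_, ?_⟩
          · rw [myD_mem]
            left
            refine ⟨rfl, ?_⟩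
            have h5 := hsum_decomp γ
            have h6 : ∑ i ∈ Finset.Icc 2 (n-1), γ i = 0 :=
              Finset.sum_eq_zero
                (fun i hi => hM i (Finset.mem_Icc.mp hi).1 (Finset.mem_Icc.mp hi).2)
            omega
          · obtain ⟨e1, e2, e3, e4, e5⟩ := phi_eval n hn 0 (γ 1) (γ n) (γ (n+1)) (Or.inl rfl)
            funext i
            by_cases hi1 : i = 1
            · subst hi1; exact e1
            by_cases hin : i = n
            · subst hin; exact e2
            by_cases hin1 : i = n + 1
            · subst hin1; exact e3
            by_cases him : 2 ≤ i ∧ i ≤ n - 1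
            · rw [e4 i him.1 him.2, if_neg (by omega)]
              exact (hM i him.1 him.2).symm
            · rw [e5 i (by omega)]
              by_cases hz : γ i = 0
              · exact hz.symm
              · exact absurd (h1 i hz) (by omega)
        · push_neg at hM
          obtain ⟨t, ht2, htn, htz⟩ := hM
          have hγt : γ t = 1 := by
            have := h3 t t ht2 le_rfl htn
            rw [if_pos rfl] at this
            omega
          have hothers : ∀ j, 2 ≤ j → j ≤ n - 1 → j ≠ t → γ j = 0 := by
            intro j hj2 hjn hjt
            by_contra hz
            rcases Nat.lt_or_ge j t with h | h
            · exact h3 j t hj2 h.le htn (by rw [if_neg hjt]; exact ⟨by omega, by omega⟩)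
            · exact h3 t j ht2 (by omega) hjn (by rw [if_neg (by omega)]; exact ⟨by omega, by omega⟩)
          have hmidsum : ∑ i ∈ Finset.Icc 2 (n-1), γ i = 1 := by
            rw [Finset.sum_eq_single_of_mem t (Finset.mem_Icc.mpr ⟨ht2, htn⟩)
              (fun b hb hbt => hothers b (Finset.mem_Icc.mp hb).1 (Finset.mem_Icc.mp hb).2 hbt),
              hγt]
          refine ⟨(t, γ 1, γ n, γ (n+1)), ?_, ?_⟩
          · rw [myD_mem]
            right
            refine ⟨ht2, htn, ?_⟩
            have h5 := hsum_decomp γ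
            omega
          · obtain ⟨e1, e2, e3, e4, e5⟩ :=
              phi_eval n hn t (γ 1) (γ n) (γ (n+1)) (Or.inr ⟨ht2, htn⟩)
            funext i
            by_cases hi1 : i = 1
            · subst hi1; exact e1
            by_cases hin : i = n
            · subst hin; exact e2
            by_cases hin1 : i = n + 1
            · subst hin1; exact e3
            by_cases him : 2 ≤ i ∧ i ≤ n - 1
            · rw [e4 i him.1 him.2]
              by_cases hit : i = t
              · rw [if_pos hit, hit, hγt]
              · rw [if_neg hit]
                exact (hothers i him.1 him.2 hit).symm
            · rw [e5 i (by omega)]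
              by_cases hz : γ i = 0
              · exact hz.symm
              · exact absurd (h1 i hz) (by omega)
      · rintro ⟨⟨t, a, b, c⟩, hp, rfl⟩
        rw [myD_mem] at hp
        have ht : t = 0 ∨ (2 ≤ t ∧ t ≤ n - 1) := by
          rcases hp with ⟨h, _⟩ | ⟨h1, h2, _⟩
          exacts [Or.inl h, Or.inr ⟨h1, h2⟩]
        obtain ⟨e1, e2, e3, e4, e5⟩ := phi_eval n hn t a b c ht
        have hmid : ∑ i ∈ Finset.Icc 2 (n-1), phi n (t, a, b, c) i
            = if t = 0 then 0 else 1 := by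
          rcases ht with h0 | ⟨hp1, hp2⟩
          · rw [if_pos h0]
            apply Finset.sum_eq_zero
            intro i hi
            rw [Finset.mem_Icc] at hi
            rw [e4 i hi.1 hi.2, if_neg (by omega)]
          · rw [if_neg (by omega)]
            rw [Finset.sum_eq_single_of_mem t (Finset.mem_Icc.mpr ⟨hp1, hp2⟩)
              (fun j hj hjt => by
                rw [Finset.mem_Icc] at hj
                rw [e4 j hj.1 hj.2, if_neg hjt])]
            rw [e4 t hp1 hp2, if_pos rfl]
        have hsumv : ∑ i ∈ Finset.Icc 1 (n+1), phi n (t, a, b, c) i = s + 1 := by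
          rw [hsum_decomp, e1, e2, e3, hmid]
          rcases hp with ⟨h0, hsum3⟩ | ⟨hp1, _, hsum3⟩
          · rw [if_pos h0]; omega
          · rw [if_neg (by omega)]; omega
        refine ⟨?_, hsumv, ?_, ?_⟩
        · intro i hz
          by_contra hc
          exact hz (e5 i hc)
        · intro i j hi hij hj
          have vi := e4 i hi (le_trans hij hj)
          have vj := e4 j (le_trans hi hij) hj
          by_cases hij' : i = j
          · rw [if_pos hij', vi]
            split_ifs <;> omega
          · rw [if_neg hij']
            rintro ⟨ha, hb⟩
            rw [vi] at ha
            rw [vj] at hb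
            split_ifs at ha hb with hx hy
            · exact hij' (hx.trans hy.symm)
            all_goals omega
        · intro i hi1 hik
          have hγ1 : phi n (t, a, b, c) 1 ≤ s + 1 := by
            rw [e1]
            rcases hp with ⟨_, h⟩ | ⟨_, _, h⟩ <;> omega
          split_ifs with h
          · omega
          · rintro ⟨hc, _⟩; omega
    rw [hset, Set.ncard_coe_finset]
    have hinj : Set.InjOn (phi n) ↑(myD n s) := by
      rintro ⟨t, a, b, c⟩ hp ⟨t', a', b', c'⟩ hp' h
      rw [Finset.mem_coe, myD_mem] at hp hp'
      have ht : t = 0 ∨ (2 ≤ t ∧ t ≤ n - 1) := by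
        rcases hp with ⟨h0, _⟩ | ⟨h1, h2, _⟩; exacts [Or.inl h0, Or.inr ⟨h1, h2⟩]
      have ht' : t' = 0 ∨ (2 ≤ t' ∧ t' ≤ n - 1) := by
        rcases hp' with ⟨h0, _⟩ | ⟨h1, h2, _⟩; exacts [Or.inl h0, Or.inr ⟨h1, h2⟩]
      obtain ⟨e1, e2, e3, e4, e5⟩ := phi_eval n hn t a b c ht
      obtain ⟨f1, f2, f3, f4, f5⟩ := phi_eval n hn t' a' b' c' ht'
      have h1 : a = a' := by rw [← e1, ← f1, h]
      have h2 : b = b' := by rw [← e2, ← f2, h]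
      have h3 : c = c' := by rw [← e3, ← f3, h]
      have h4 : t = t' := by
        by_contra hne
        rcases ht with h0 | ⟨ha, hb⟩
        · rcases ht' with h0' | ⟨ha', hb'⟩
          · exact hne (h0.trans h0'.symm)
          · have hc := congrFun h t'
            rw [e4 t' ha' hb', f4 t' ha' hb', if_pos rfl, if_neg (by omega)] at hc
            exact absurd hc (by omega)
        · have hc := congrFun h t
          rw [e4 t ha hb, f4 t ha hb, if_pos rfl, if_neg (by omega)] at hc
          exact absurd hc (by omega)
      rw [h1, h2, h3, h4]
    rw [Finset.card_image_of_injOn hinj]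
    have hcard : (myD n s).card = (s + 3).choose 2 + (n - 2) * (s + 2).choose 2 := by
      unfold myD
      rw [Finset.card_union_of_disjoint]
      · rw [Finset.card_product, Finset.card_product, Finset.card_singleton, myT_card,
          myT_card, Nat.card_Icc, show n - 1 + 1 - 2 = n - 2 from by omega,
          show s + 1 + 2 = s + 3 from rfl, one_mul]
      · simp only [Finset.disjoint_left, Finset.mem_product, Finset.mem_singleton,
          Finset.mem_Icc]
        rintro p ⟨h0, _⟩ ⟨⟨h2, _⟩, _⟩
        omega
    rw [hcard]
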